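/- Let k ≥ 2 and let G be an odd k⁺-critical graph with respect to taking minors. Then the minimum degree of G satisfies δ(G) ≥ ⌊k/2⌋. -/

import Mathlib

open SimpleGraph

/-- The degree of a vertex, as the cardinality of its neighbor set. -/
noncomputable def deg {V : Type} (G : SimpleGraph V) (v : V) : ℕ := (G.neighborSet v).ncard

/-- `H` is a minor of `G`, via branch sets. -/
def IsMinor {W V : Type} (H : SimpleGraph W) (G : SimpleGraph V) : Prop :=
  ∃ B : W → Set V,
    (∀ w, (B w).Nonempty) ∧
    (∀ w, (G.induce (B w)).Connected) ∧
    (Pairwise fun w₁ w₂ => Disjoint (B w₁) (B w₂)) ∧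
    (∀ w₁ w₂, H.Adj w₁ w₂ → ∃ v₁ ∈ B w₁, ∃ v₂ ∈ B w₂, G.Adj v₁ v₂)

/-- A graph is planar iff it has no `K₅` and no `K₃,₃` minor (Wagner's theorem). -/
def IsPlanar {V : Type} (G : SimpleGraph V) : Prop :=
  ¬ IsMinor (completeGraph (Fin 5)) G ∧
  ¬ IsMinor (completeBipartiteGraph (Fin 3) (Fin 3)) G

/-- `G` has thickness at most `t`: its edge set partitions into `t` planar subgraphs. -/
def ThicknessLE {V : Type} (G : SimpleGraph V) (t : ℕ) : Prop :=
  ∃ c : Sym2 V → Fin t, ∀ i : Fin t,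
    IsPlanar (SimpleGraph.fromEdgeSet {e | e ∈ G.edgeSet ∧ c e = i})

/-- The thickness of a graph. -/
noncomputable def thickness {V : Type} (G : SimpleGraph V) : ℕ :=
  sInf {t | ThicknessLE G t}

/-- `φ` is an odd coloring of `G` with `k` colors. -/
def IsOddColoring {V : Type} (G : SimpleGraph V) {k : ℕ} (φ : V → Fin k) : Prop :=
  (∀ ⦃u v⦄, G.Adj u v → φ u ≠ φ v) ∧
  ∀ v : V, (G.neighborSet v).Nonempty →
    ∃ c : Fin k, Odd ({u | u ∈ G.neighborSet v ∧ φ u = c}.ncard)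

/-- The odd chromatic number of `G`. -/
noncomputable def oddChrom {V : Type} (G : SimpleGraph V) : ℕ :=
  sInf {k | ∃ φ : V → Fin k, IsOddColoring G φ}

/-- `G` is odd `k⁺`-critical. -/
def OddCritical {V : Type} (G : SimpleGraph V) (k : ℕ) : Prop :=
  k ≤ oddChrom G ∧ ∀ H : G.Subgraph, H ≠ ⊤ → oddChrom H.coe < k

/-- A vertex is `n`-easy if its degree is odd or it has a neighbor of degree `2i`, `1 ≤ i ≤ n`. -/
def NEasy {V : Type} (G : SimpleGraph V) (n : ℕ) (v : V) : Prop :=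
  Odd (deg G v) ∨ ∃ u ∈ G.neighborSet v, ∃ i, 1 ≤ i ∧ i ≤ n ∧ deg G u = 2 * i


/-- `G` is odd `k⁺`-critical with respect to taking minors. -/
def OddMinorCritical {V : Type} (G : SimpleGraph V) (k : ℕ) : Prop :=
  k ≤ oddChrom G ∧
  ∀ (W : Type) (H : SimpleGraph W), IsMinor H G → ¬ IsMinor G H → oddChrom H < k

/-- An odd `k⁺`-critical graph with respect to minors (`k ≥ 2`) has minimum degree `≥ ⌊k/2⌋`. -/
lemma isOddColoring_castLE {V : Type} (G : SimpleGraph V) {m n : ℕ} (h : m ≤ n)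
    {φ : V → Fin m} (hφ : IsOddColoring G φ) :
    IsOddColoring G (fun x => Fin.castLE h (φ x)) := by
  constructor
  · intro u v huv hc
    exact hφ.1 huv (Fin.castLE_injective h hc)
  · intro v hv
    obtain ⟨c, hc⟩ := hφ.2 v hv
    refine ⟨Fin.castLE h c, ?_⟩
    have : {u | u ∈ G.neighborSet v ∧ Fin.castLE h (φ u) = Fin.castLE h c}
        = {u | u ∈ G.neighborSet v ∧ φ u = c} := by
      ext x
      simp only [Set.mem_setOf_eq, and_congr_right_iff]
      exact fun _ => ⟨fun hx => Fin.castLE_injective h hx, fun hx => by rw [hx]⟩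
    rw [this]; exact hc

lemma exists_isOddColoring {V : Type} [Fintype V] (G : SimpleGraph V) :
    ∃ φ : V → Fin (Fintype.card V), IsOddColoring G φ := by
  classical
  refine ⟨Fintype.equivFin V, ?_, ?_⟩
  · intro u v huv hc
    exact huv.ne ((Fintype.equivFin V).injective hc)
  · rintro v ⟨u, hu⟩
    refine ⟨Fintype.equivFin V u, ?_⟩
    have : {x | x ∈ G.neighborSet v ∧ Fintype.equivFin V x = Fintype.equivFin V u} = {u} := by
      ext x
      simp only [Set.mem_setOf_eq, Set.mem_singleton_iff]
      constructor
      · rintro ⟨_, hx⟩; exact (Fintype.equivFin V).injective hx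
      · rintro rfl; exact ⟨hu, rfl⟩
    rw [this, Set.ncard_singleton]
    exact odd_one

lemma exists_coloring_of_oddChrom_lt {W : Type} [Fintype W] (H : SimpleGraph W) {k : ℕ}
    (hk : 1 ≤ k) (h : oddChrom H < k) : ∃ φ : W → Fin (k-1), IsOddColoring H φ := by
  have hne : {m | ∃ φ : W → Fin m, IsOddColoring H φ}.Nonempty :=
    ⟨Fintype.card W, exists_isOddColoring H⟩
  obtain ⟨φ, hφ⟩ := Nat.sInf_mem hne
  have hle : oddChrom H ≤ k - 1 := by omega
  exact ⟨_, isOddColoring_castLE H hle hφ⟩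

lemma not_isMinor_of_card_lt {W V : Type} [Fintype V] [Fintype W] (H : SimpleGraph W)
    (G : SimpleGraph V) (hcard : Fintype.card W < Fintype.card V) : ¬ IsMinor G H := by
  rintro ⟨B, hne, _, hdisj, _⟩
  have hinj : Function.Injective (fun x => (hne x).some) := by
    intro a b hab
    by_contra hne'
    have hmem : (hne a).some ∈ B b := by
      rw [show (hne a).some = (hne b).some from hab]; exact (hne b).some_mem
    exact Set.disjoint_left.mp (hdisj hne') (hne a).some_mem hmem
  have := Fintype.card_le_of_injective _ hinj
  omega

lemma connected_induce_singleton {V : Type} (G : SimpleGraph V) (w : V) :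
    (G.induce {w}).Connected := by
  haveI : Nonempty ({w} : Set V) := ⟨⟨w, rfl⟩⟩
  refine ⟨fun a b => ?_⟩
  have : a = b := Subtype.ext (a.2.trans b.2.symm)
  exact this ▸ Reachable.refl a

lemma connected_induce_pair {V : Type} (G : SimpleGraph V) {u v : V} (h : G.Adj u v) :
    (G.induce {u, v}).Connected := by
  have key : ∀ (a b : ({u, v} : Set V)), (a : V) = u → (b : V) = v →
      (G.induce {u, v}).Reachable a b := by
    intro a b ha hb
    refine Adj.reachable ?_
    show G.Adj (a : V) (b : V)
    rw [ha, hb]; exact h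
  haveI : Nonempty ({u, v} : Set V) := ⟨⟨u, Or.inl rfl⟩⟩
  refine ⟨fun a b => ?_⟩
  rcases a.2 with ha | ha <;> rcases b.2 with hb | hb
  · exact (Subtype.ext (ha.trans hb.symm) : a = b) ▸ Reachable.refl a
  · exact key a b ha hb
  · exact (key b a hb ha).symm
  · exact (Subtype.ext (ha.trans hb.symm) : a = b) ▸ Reachable.refl a

lemma setOf_eq_image {V : Type} {v : V} (s : Set V) (hv : v ∉ s) :
    s = Subtype.val '' {w : {x : V // x ≠ v} | (w : V) ∈ s} := by
  ext y
  constructor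
  · intro hy; exact ⟨⟨y, fun h => hv (h ▸ hy)⟩, hy, rfl⟩
  · rintro ⟨w, hw, rfl⟩; exact hw

theorem oddMinorCritical_minDegree {V : Type} [Fintype V] (G : SimpleGraph V)
    (k : ℕ) (hk : 2 ≤ k) (hG : OddMinorCritical G k) :
    ∀ v : V, k / 2 ≤ deg G v := by
  classical
  intro v
  by_contra hdeg
  push_neg at hdeg
  suffices hsuff : ∃ ψ : V → Fin (k-1), IsOddColoring G ψ by
    have h1 : oddChrom G ≤ k - 1 := Nat.sInf_le hsuff
    have h2 := hG.1
    omega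
  have hk1 : 0 < k - 1 := by omega
  have hcardW : Fintype.card {x : V // x ≠ v} < Fintype.card V :=
    Fintype.card_subtype_lt (x := v) (by simp)
  by_cases hiso : (G.neighborSet v).Nonempty
  · -- v has a neighbor u; contract the edge uv
    obtain ⟨u, hu⟩ := hiso
    rw [mem_neighborSet] at hu
    have huv : u ≠ v := fun h => G.irrefl (h ▸ hu)
    set H : SimpleGraph {x : V // x ≠ v} :=
      { Adj := fun a b => a ≠ b ∧
          (G.Adj a b ∨ ((a : V) = u ∧ G.Adj v b) ∨ ((b : V) = u ∧ G.Adj v a)),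
        symm := ⟨by
          rintro a b ⟨hne, hor⟩
          refine ⟨hne.symm, ?_⟩
          rcases hor with h | h | h
          · exact Or.inl h.symm
          · exact Or.inr (Or.inr h)
          · exact Or.inr (Or.inl h)⟩,
        loopless := ⟨fun a h => h.1 rfl⟩ } with hH
    have hmin : IsMinor H G := by
      refine ⟨fun w => if (w : V) = u then {u, v} else {(w : V)}, ?_, ?_, ?_, ?_⟩
      · intro w
        dsimp only
        by_cases hw : (w : V) = u
        · rw [if_pos hw]; exact ⟨u, Or.inl rfl⟩
        · rw [if_neg hw]; exact ⟨w, rfl⟩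
      · intro w
        dsimp only
        by_cases hw : (w : V) = u
        · rw [if_pos hw]; exact connected_induce_pair G hu.symm
        · rw [if_neg hw]; exact connected_induce_singleton G w
      · intro a b hab
        have hvals : (a : V) ≠ (b : V) := fun h => hab (Subtype.ext h)
        dsimp only
        by_cases ha : (a : V) = u <;> by_cases hb : (b : V) = u
        · exact absurd (ha.trans hb.symm) hvals
        · simp only [if_pos ha, if_neg hb]
          rw [Set.disjoint_left]
          intro x hx hx'
          simp only [Set.mem_insert_iff, Set.mem_singleton_iff] at hx
          simp only [Set.mem_singleton_iff] at hx'
          rcases hx with rfl | rfl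
          · exact hb hx'.symm
          · exact b.2 hx'.symm
        · simp only [if_neg ha, if_pos hb]
          rw [Set.disjoint_right]
          intro x hx hx'
          simp only [Set.mem_insert_iff, Set.mem_singleton_iff] at hx
          simp only [Set.mem_singleton_iff] at hx'
          rcases hx with rfl | rfl
          · exact ha hx'.symm
          · exact a.2 hx'.symm
        · simp only [if_neg ha, if_neg hb]
          rw [Set.disjoint_singleton_left]
          simp only [Set.mem_singleton_iff]
          exact hvals
      · rintro a b ⟨hne, hor⟩
        have hself : ∀ w : {x : V // x ≠ v},
            (w : V) ∈ (if (w : V) = u then ({u, v} : Set V) else {(w : V)}) := by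
          intro w
          split
          · next h => rw [h]; exact Or.inl rfl
          · exact rfl
        rcases hor with h | ⟨ha, h⟩ | ⟨hb, h⟩
        · exact ⟨a, hself a, b, hself b, h⟩
        · refine ⟨v, ?_, b, hself b, h⟩
          dsimp only
          rw [if_pos ha]
          exact Or.inr rfl
        · refine ⟨a, hself a, v, ?_, h.symm⟩
          dsimp only
          rw [if_pos hb]
          exact Or.inr rfl
    have hlt := hG.2 _ H hmin (not_isMinor_of_card_lt H G hcardW)
    obtain ⟨φ, hφ⟩ := exists_coloring_of_oddChrom_lt H (by omega) hlt
    set ψ0 : V → Fin (k-1) := fun x => if hx : x = v then ⟨0, hk1⟩ else φ ⟨x, hx⟩ with hψ0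
    have hψ0eq : ∀ (x : V) (hx : x ≠ v), ψ0 x = φ ⟨x, hx⟩ := fun x hx => dif_neg hx
    set cnt : V → Fin (k-1) → Set V :=
      fun w γ => {y | y ∈ G.neighborSet w ∧ y ≠ v ∧ ψ0 y = γ} with hcnt
    set γfun : V → Fin (k-1) :=
      fun w => if h : ∃ γ, Odd (cnt w γ).ncard then h.choose else ⟨0, hk1⟩ with hγ
    set S : Finset V := (G.neighborSet v).toFinite.toFinset with hSdef
    have hScard : S.card = deg G v := by
      rw [hSdef, deg]
      exact (Set.ncard_eq_toFinset_card _ _).symm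
    have hSmem : ∀ x, x ∈ S ↔ G.Adj v x := by
      intro x
      rw [hSdef, Set.Finite.mem_toFinset, mem_neighborSet]
    set F : Finset (Fin (k-1)) := S.image ψ0 ∪ S.image γfun with hF
    have hFcard : F.card ≤ 2 * deg G v := by
      calc F.card ≤ (S.image ψ0).card + (S.image γfun).card := Finset.card_union_le _ _
        _ ≤ S.card + S.card := Nat.add_le_add Finset.card_image_le Finset.card_image_le
        _ = 2 * deg G v := by rw [hScard]; ring
    obtain ⟨c, hcF⟩ : ∃ c, c ∉ F := by
      by_contra hcon
      push_neg at hcon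
      have huniv : F = Finset.univ := Finset.eq_univ_iff_forall.mpr hcon
      have hcardF : F.card = k - 1 := by rw [huniv, Finset.card_univ, Fintype.card_fin]
      omega
    have hc1 : ∀ w, G.Adj v w → c ≠ ψ0 w := by
      intro w hw heq
      apply hcF
      rw [heq]
      exact Finset.mem_union_left _ (Finset.mem_image_of_mem ψ0 ((hSmem w).mpr hw))
    have hc2 : ∀ w, G.Adj v w → c ≠ γfun w := by
      intro w hw heq
      apply hcF
      rw [heq]
      exact Finset.mem_union_right _ (Finset.mem_image_of_mem γfun ((hSmem w).mpr hw))
    refine ⟨fun x => if x = v then c else ψ0 x, ?_, ?_⟩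
    · -- properness
      intro a b hab
      dsimp only
      by_cases ha : a = v
      · have hb : b ≠ v := fun h => G.irrefl (((ha.trans h.symm) : a = b) ▸ hab)
        have hvb : G.Adj v b := by rw [← ha]; exact hab
        rw [if_pos ha, if_neg hb]
        exact hc1 b hvb
      · by_cases hb : b = v
        · have hva : G.Adj v a := by rw [← hb]; exact hab.symm
          rw [if_neg ha, if_pos hb]
          exact fun h => hc1 a hva h.symm
        · rw [if_neg ha, if_neg hb]
          have hadj : H.Adj ⟨a, ha⟩ ⟨b, hb⟩ :=
            ⟨fun h => hab.ne (congrArg Subtype.val h), Or.inl hab⟩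
          have hne := hφ.1 hadj
          rw [hψ0eq a ha, hψ0eq b hb]
          exact hne
    · -- odd condition
      intro x hx
      by_cases hxv : x = v
      · subst hxv
        refine ⟨ψ0 u, ?_⟩
        have hset : {y | y ∈ G.neighborSet x ∧ (if y = x then c else ψ0 y) = ψ0 u} = {u} := by
          ext y
          simp only [Set.mem_setOf_eq, Set.mem_singleton_iff, mem_neighborSet]
          constructor
          · rintro ⟨hy1, hy2⟩
            have hyx : y ≠ x := hy1.ne'
            rw [if_neg hyx] at hy2
            by_contra hyu
            have hadj : H.Adj ⟨y, hyx⟩ ⟨u, huv⟩ :=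
              ⟨fun h => hyu (congrArg Subtype.val h), Or.inr (Or.inr ⟨rfl, hy1⟩)⟩
            have := hφ.1 hadj
            rw [← hψ0eq y hyx, ← hψ0eq u huv] at this
            exact this hy2
          · rintro rfl
            exact ⟨hu, by rw [if_neg huv]⟩
        rw [hset, Set.ncard_singleton]
        exact odd_one
      · by_cases hxadj : G.Adj v x
        · -- x is a neighbor of v
          by_cases hodd : ∃ γ, Odd (cnt x γ).ncard
          · refine ⟨γfun x, ?_⟩
            have hγeq : γfun x = hodd.choose := by
              rw [hγ]
              exact dif_pos hodd
            have hγx : Odd (cnt x (γfun x)).ncard := by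
              rw [hγeq]
              exact hodd.choose_spec
            have hcne : c ≠ γfun x := hc2 x hxadj
            have hset : {y | y ∈ G.neighborSet x ∧ (if y = v then c else ψ0 y) = γfun x}
                = cnt x (γfun x) := by
              ext y
              simp only [hcnt, Set.mem_setOf_eq]
              constructor
              · rintro ⟨hy1, hy2⟩
                by_cases hyv : y = v
                · rw [if_pos hyv] at hy2
                  exact absurd hy2 hcne
                · rw [if_neg hyv] at hy2
                  exact ⟨hy1, hyv, hy2⟩
              · rintro ⟨hy1, hy2, hy3⟩
                exact ⟨hy1, by rw [if_neg hy2]; exact hy3⟩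
            rw [hset]
            exact hγx
          · push_neg at hodd
            refine ⟨c, ?_⟩
            have hvmem : v ∈ G.neighborSet x := hxadj.symm
            have hset : {y | y ∈ G.neighborSet x ∧ (if y = v then c else ψ0 y) = c}
                = insert v (cnt x c) := by
              ext y
              simp only [hcnt, Set.mem_setOf_eq, Set.mem_insert_iff]
              constructor
              · rintro ⟨hy1, hy2⟩
                by_cases hyv : y = v
                · exact Or.inl hyv
                · rw [if_neg hyv] at hy2
                  exact Or.inr ⟨hy1, hyv, hy2⟩
              · rintro (rfl | ⟨hy1, hy2, hy3⟩)
                · exact ⟨hvmem, if_pos rfl⟩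
                · exact ⟨hy1, by rw [if_neg hy2]; exact hy3⟩
            rw [hset, Set.ncard_insert_of_notMem (fun hmem => hmem.2.1 rfl) (Set.toFinite _)]
            exact (Nat.not_odd_iff_even.mp (hodd c)).add_one
        · -- x is not a neighbor of v
          obtain ⟨y, hy⟩ := hx
          rw [mem_neighborSet] at hy
          have hyv : y ≠ v := fun h => hxadj (by rw [← h]; exact hy.symm)
          have hxu : x ≠ u := fun h => hxadj (by rw [h]; exact hu)
          have hHadj : ∀ w : {z : V // z ≠ v}, H.Adj ⟨x, hxv⟩ w ↔ G.Adj x w := by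
            intro w
            constructor
            · rintro ⟨_, h | ⟨h1, h2⟩ | ⟨h1, h2⟩⟩
              · exact h
              · exact absurd h1 hxu
              · exact absurd h2 hxadj
            · intro h
              exact ⟨fun he => h.ne (congrArg Subtype.val he), Or.inl h⟩
          obtain ⟨c', hc'⟩ := hφ.2 ⟨x, hxv⟩ ⟨⟨y, hyv⟩, (hHadj ⟨y, hyv⟩).mpr hy⟩
          refine ⟨c', ?_⟩
          have hvnotin : v ∉ {y | y ∈ G.neighborSet x ∧ (if y = v then c else ψ0 y) = c'} :=
            fun hmem => hxadj hmem.1.symm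
          rw [setOf_eq_image _ hvnotin, Set.ncard_image_of_injective _ Subtype.val_injective]
          have hseteq : {w : {z : V // z ≠ v} |
                (w : V) ∈ {y | y ∈ G.neighborSet x ∧ (if y = v then c else ψ0 y) = c'}}
              = {w | w ∈ H.neighborSet ⟨x, hxv⟩ ∧ φ w = c'} := by
            ext w
            simp only [Set.mem_setOf_eq, mem_neighborSet]
            rw [if_neg w.2, hψ0eq w w.2]
            exact ⟨fun h => ⟨(hHadj w).mpr h.1, h.2⟩, fun h => ⟨(hHadj w).mp h.1, h.2⟩⟩
          rw [hseteq]
          exact hc'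
  · -- v is isolated: delete it
    set H : SimpleGraph {x : V // x ≠ v} := G.comap Subtype.val with hH
    have hmin : IsMinor H G := by
      refine ⟨fun w => {(w : V)}, fun w => ⟨w, rfl⟩,
        fun w => connected_induce_singleton G w, ?_, ?_⟩
      · intro a b hab
        rw [Set.disjoint_singleton_left]
        simp only [Set.mem_singleton_iff]
        exact fun h => hab (Subtype.ext h)
      · intro a b hab
        exact ⟨a, rfl, b, rfl, hab⟩
    have hlt := hG.2 _ H hmin (not_isMinor_of_card_lt H G hcardW)
    obtain ⟨φ, hφ⟩ := exists_coloring_of_oddChrom_lt H (by omega) hlt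
    have hvn : ∀ x, ¬ G.Adj v x := fun x hx => hiso ⟨x, hx⟩
    refine ⟨fun x => if hx : x = v then ⟨0, hk1⟩ else φ ⟨x, hx⟩, ?_, ?_⟩
    · intro a b hab
      have ha : a ≠ v := fun h => hvn b (h ▸ hab)
      have hb : b ≠ v := fun h => hvn a (h ▸ hab.symm)
      dsimp only
      rw [dif_neg ha, dif_neg hb]
      exact hφ.1 (show H.Adj ⟨a, ha⟩ ⟨b, hb⟩ from hab)
    · intro x hx
      have hxv : x ≠ v := by
        rintro rfl
        exact hiso hx
      obtain ⟨y, hy⟩ := hx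
      rw [mem_neighborSet] at hy
      have hyv : y ≠ v := fun h => hvn x (by rw [← h]; exact hy.symm)
      obtain ⟨c, hc⟩ := hφ.2 ⟨x, hxv⟩ ⟨⟨y, hyv⟩, hy⟩
      refine ⟨c, ?_⟩
      have hvnotin : v ∉ {u | u ∈ G.neighborSet x ∧
          (if hu : u = v then (⟨0, hk1⟩ : Fin (k-1)) else φ ⟨u, hu⟩) = c} :=
        fun hmem => hvn x hmem.1.symm
      rw [setOf_eq_image _ hvnotin, Set.ncard_image_of_injective _ Subtype.val_injective]
      have hseteq : {w : {z : V // z ≠ v} | (w : V) ∈ {u | u ∈ G.neighborSet x ∧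
            (if hu : u = v then (⟨0, hk1⟩ : Fin (k-1)) else φ ⟨u, hu⟩) = c}}
          = {w | w ∈ H.neighborSet ⟨x, hxv⟩ ∧ φ w = c} := by
        ext w
        simp only [Set.mem_setOf_eq, mem_neighborSet]
        rw [dif_neg w.2]
        exact Iff.rfl
      rw [hseteq]
      exact hc
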